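/- arXiv:2603.11773 — 2 statements merged into one kernel-verified Lean document; each statement's English description precedes it below -/
import Mathlib

section
/- Let k ≥ 1 and m ≥ 1 be integers and let n ≥ (2k+1)·m³. Then every proper edge coloring of any balanced blowup C_{2k+1}⟨n⟩ of the odd cycle C_{2k+1} on n vertices contains a rainbow copy of the balanced blowup C_{2k+1}⟨m⟩ on m vertices. -/
open Filter SimpleGraph

/-- `G` contains a copy of `F` as a (not necessarily induced) subgraph. -/
def Contains {α β : Type} (F : SimpleGraph α) (G : SimpleGraph β) : Prop :=
  ∃ f : F →g G, Function.Injective f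

/-- A proper edge coloring: edges sharing a vertex receive distinct colors. -/
def IsProperEdgeColoring {β : Type} (G : SimpleGraph β) (c : Sym2 β → ℕ) : Prop :=
  ∀ e₁ ∈ G.edgeSet, ∀ e₂ ∈ G.edgeSet, e₁ ≠ e₂ → (∃ v, v ∈ e₁ ∧ v ∈ e₂) → c e₁ ≠ c e₂

/-- There is a rainbow copy of `F` in `G` with respect to the edge coloring `c`:
a copy of `F` all of whose edges receive pairwise distinct colors. -/
def HasRainbowCopy {α β : Type} (F : SimpleGraph α) (G : SimpleGraph β)
    (c : Sym2 β → ℕ) : Prop :=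
  ∃ f : F →g G, Function.Injective f ∧
    ∀ e₁ ∈ F.edgeSet, ∀ e₂ ∈ F.edgeSet,
      c (Sym2.map f e₁) = c (Sym2.map f e₂) → e₁ = e₂

/-- The blowup of `G` with part sizes `t`. -/
def blowup {α : Type} (G : SimpleGraph α) (t : α → ℕ) :
    SimpleGraph (Σ v : α, Fin (t v)) where
  Adj x y := G.Adj x.1 y.1
  symm := ⟨fun _ _ h => G.adj_symm h⟩
  loopless := ⟨fun x h => G.irrefl (v := x.1) h⟩

/-- `t` describes a balanced blowup on `n` vertices: all parts are nonempty,
any two part sizes differ by at most one, and the total number of vertices is `n`. -/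
def IsBalanced {α : Type} [Fintype α] (t : α → ℕ) (n : ℕ) : Prop :=
  (∀ v, 0 < t v) ∧ (∀ u v, t u ≤ t v + 1) ∧ ∑ v, t v = n

/-- The number of subgraphs of `G` isomorphic to `H`. -/
noncomputable def copyCount {α β : Type} (H : SimpleGraph α) (G : SimpleGraph β) : ℕ :=
  Set.ncard {H' : G.Subgraph | Nonempty (H ≃g H'.coe)}

/-- The set of sizes of the smaller color class over all proper 2-colorings of the
vertices of `F`; its least element is `p(F)`. -/
def smallerClassSizes {α : Type} [Fintype α] (F : SimpleGraph α) : Set ℕ :=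
  {t | ∃ χ : α → Bool, (∀ u v, F.Adj u v → χ u ≠ χ v) ∧
    t = min (Finset.univ.filter fun x => χ x = true).card
            (Finset.univ.filter fun x => χ x = false).card}

/-- The set of `j` such that `F` is a subgraph of some blowup of `C_{2j-1}`;
its greatest element is `γ(F)`. -/
def gammaSet {α : Type} (F : SimpleGraph α) : Set ℕ :=
  {j | ∃ t : Fin (2 * j - 1) → ℕ, (∀ v, 0 < t v) ∧
    Contains F (blowup (cycleGraph (2 * j - 1)) t)}

/-- For `k, m ≥ 1` and `n ≥ (2k+1)·m³`, every proper edge coloring of any balanced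
blowup `C_{2k+1}⟨n⟩` contains a rainbow copy of any balanced blowup `C_{2k+1}⟨m⟩`. -/
theorem stmt6 (k m n : ℕ) (hk : 1 ≤ k) (hm : 1 ≤ m) (hn : (2 * k + 1) * m ^ 3 ≤ n)
    (tn : Fin (2 * k + 1) → ℕ) (htn : IsBalanced tn n)
    (tm : Fin (2 * k + 1) → ℕ) (htm : IsBalanced tm m)
    (c : Sym2 (Σ v : Fin (2 * k + 1), Fin (tn v)) → ℕ)
    (hc : IsProperEdgeColoring (blowup (cycleGraph (2 * k + 1)) tn) c) :
    HasRainbowCopy (blowup (cycleGraph (2 * k + 1)) tm)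
      (blowup (cycleGraph (2 * k + 1)) tn) c := by
  classical
  obtain ⟨htn1, htn2, htn3⟩ := htn
  obtain ⟨htm1, htm2, htm3⟩ := htm
  have hN3 : 3 ≤ 2 * k + 1 := by omega
  have hmN : 2 * k + 1 ≤ m := by
    calc 2 * k + 1 = ∑ _v : Fin (2 * k + 1), 1 := by simp
    _ ≤ ∑ v, tm v := Finset.sum_le_sum (fun v _ => htm1 v)
    _ = m := htm3
  have hm3 : ∀ v : Fin (2 * k + 1), m ^ 3 ≤ tn v + 1 := by
    intro v
    have h1 : n ≤ (2 * k + 1) * (tn v + 1) := by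
      calc n = ∑ u, tn u := htn3.symm
      _ ≤ ∑ _u : Fin (2 * k + 1), (tn v + 1) :=
          Finset.sum_le_sum (fun u _ => htn2 u v)
      _ = (2 * k + 1) * (tn v + 1) := by simp [Finset.sum_const, mul_comm]
    exact Nat.le_of_mul_le_mul_left (le_trans hn h1) (by omega)
  have hcardα : Fintype.card (Σ v : Fin (2 * k + 1), Fin (tm v)) = m := by
    simp [htm3]
  -- the key inductive construction
  have key : ∀ s : Finset (Σ v : Fin (2 * k + 1), Fin (tm v)),
      ∃ g : (Σ v : Fin (2 * k + 1), Fin (tm v)) → (Σ v : Fin (2 * k + 1), Fin (tn v)),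
        (∀ z, (g z).1 = z.1) ∧
        (∀ z₁ ∈ s, ∀ z₂ ∈ s, g z₁ = g z₂ → z₁ = z₂) ∧
        (∀ a ∈ s, ∀ b ∈ s, ∀ a' ∈ s, ∀ b' ∈ s,
          (cycleGraph (2 * k + 1)).Adj a.1 b.1 → (cycleGraph (2 * k + 1)).Adj a'.1 b'.1 →
          c s(g a, g b) = c s(g a', g b') →
          (s(a, b) : Sym2 (Σ v : Fin (2 * k + 1), Fin (tm v))) = s(a', b')) := by
    intro s
    induction s using Finset.induction_on with
    | empty =>
      exact ⟨fun z => ⟨z.1, ⟨0, htn1 z.1⟩⟩, fun z => rfl, by simp, by simp⟩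
    | @insert x s hx ih =>
      obtain ⟨g, hg1, hg2, hg3⟩ := ih
      set C : Finset (Σ v : Fin (2 * k + 1), Fin (tn v)) :=
        Finset.univ.filter (fun w => w.1 = x.1) with hC
      have hCcard : C.card = tn x.1 := by
        have hCeq : C = Finset.univ.image
            (fun i : Fin (tn x.1) => (⟨x.1, i⟩ : Σ v : Fin (2 * k + 1), Fin (tn v))) := by
          ext ⟨v, i⟩
          simp only [hC, Finset.mem_filter, Finset.mem_univ, true_and, Finset.mem_image]
          constructor
          · rintro rfl
            exact ⟨i, rfl⟩
          · rintro ⟨j, hj⟩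
            cases hj
            rfl
        rw [hCeq, Finset.card_image_of_injective _ sigma_mk_injective, Finset.card_univ,
          Fintype.card_fin]
      set B : Finset (Σ v : Fin (2 * k + 1), Fin (tn v)) :=
        s.image g ∪ ((s ×ˢ s ×ˢ s).filter
            (fun p => (cycleGraph (2 * k + 1)).Adj x.1 p.1.1)).biUnion
          (fun p => C.filter (fun w => c s(w, g p.1) = c s(g p.2.1, g p.2.2))) with hB
      have hone : ∀ p ∈ (s ×ˢ s ×ˢ s).filter
          (fun p => (cycleGraph (2 * k + 1)).Adj x.1 p.1.1),
          (C.filter (fun w => c s(w, g p.1) = c s(g p.2.1, g p.2.2))).card ≤ 1 := by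
        intro p hp
        rw [Finset.card_le_one]
        intro w₁ hw₁ w₂ hw₂
        rw [Finset.mem_filter] at hw₁ hw₂
        obtain ⟨hw₁C, hw₁c⟩ := hw₁
        obtain ⟨hw₂C, hw₂c⟩ := hw₂
        have hw₁1 : w₁.1 = x.1 := (Finset.mem_filter.mp hw₁C).2
        have hw₂1 : w₂.1 = x.1 := (Finset.mem_filter.mp hw₂C).2
        by_contra hne
        have hadjp : (cycleGraph (2 * k + 1)).Adj x.1 p.1.1 := (Finset.mem_filter.mp hp).2
        have hxp : x.1 ≠ p.1.1 := (cycleGraph (2 * k + 1)).ne_of_adj hadjp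
        have hne1 : w₁ ≠ g p.1 := by
          intro h
          exact hxp (by rw [← hw₁1, h, hg1])
        have hne2 : w₂ ≠ g p.1 := by
          intro h
          exact hxp (by rw [← hw₂1, h, hg1])
        have hE1 : s(w₁, g p.1) ∈ (blowup (cycleGraph (2 * k + 1)) tn).edgeSet := by
          rw [SimpleGraph.mem_edgeSet]
          show (cycleGraph (2 * k + 1)).Adj w₁.1 (g p.1).1
          rw [hw₁1, hg1]; exact hadjp
        have hE2 : s(w₂, g p.1) ∈ (blowup (cycleGraph (2 * k + 1)) tn).edgeSet := by
          rw [SimpleGraph.mem_edgeSet]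
          show (cycleGraph (2 * k + 1)).Adj w₂.1 (g p.1).1
          rw [hw₂1, hg1]; exact hadjp
        have hEne : s(w₁, g p.1) ≠ s(w₂, g p.1) := by
          intro h
          rcases Sym2.eq_iff.mp h with ⟨h1, _⟩ | ⟨h1, _⟩
          · exact hne h1
          · exact hne1 h1
        exact hc _ hE1 _ hE2 hEne ⟨g p.1, by simp, by simp⟩ (hw₁c.trans hw₂c.symm)
      have hBcard : B.card < C.card := by
        have h1 : B.card ≤ s.card + s.card ^ 3 := by
          have h2 : (((s ×ˢ s ×ˢ s).filter
              (fun p => (cycleGraph (2 * k + 1)).Adj x.1 p.1.1)).biUnion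
              (fun p => C.filter (fun w => c s(w, g p.1) = c s(g p.2.1, g p.2.2)))).card
              ≤ s.card ^ 3 := by
            calc _ ≤ ((s ×ˢ s ×ˢ s).filter
                  (fun p => (cycleGraph (2 * k + 1)).Adj x.1 p.1.1)).card * 1 :=
                Finset.card_biUnion_le_card_mul _ _ _ hone
            _ ≤ (s ×ˢ s ×ˢ s).card * 1 :=
                Nat.mul_le_mul_right _ (Finset.card_filter_le _ _)
            _ = s.card ^ 3 := by
                simp [Finset.card_product]; ring
          calc B.card ≤ (s.image g).card + _ := Finset.card_union_le _ _
          _ ≤ s.card + s.card ^ 3 := Nat.add_le_add (Finset.card_image_le) h2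
        have hqm : s.card + 1 ≤ m := by
          have := Finset.card_le_card (Finset.subset_univ (insert x s))
          rw [Finset.card_insert_of_notMem hx, Finset.card_univ, hcardα] at this
          exact this
        have hnum : s.card + s.card ^ 3 + 2 ≤ m ^ 3 := by
          have hcube : (s.card + 1) ^ 3 ≤ m ^ 3 := Nat.pow_le_pow_left hqm 3
          have h27 : 27 ≤ m ^ 3 := by
            calc (27 : ℕ) = 3 ^ 3 := by norm_num
            _ ≤ m ^ 3 := Nat.pow_le_pow_left (le_trans hN3 hmN) 3
          rcases Nat.eq_zero_or_pos s.card with h | h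
          · rw [h]; omega
          · nlinarith [hcube, h]
        have := hm3 x.1
        omega
      have hwex : ∃ w ∈ C, w ∉ B := by
        have h1 : C.card - B.card ≤ (C \ B).card := Finset.le_card_sdiff _ _
        have h2 : (C \ B).Nonempty := by
          rw [← Finset.card_pos]
          omega
        obtain ⟨w, hw⟩ := h2
        rw [Finset.mem_sdiff] at hw
        exact ⟨w, hw.1, hw.2⟩
      obtain ⟨w, hwC, hwB⟩ := hwex
      have hw1 : w.1 = x.1 := (Finset.mem_filter.mp hwC).2
      rw [hB, Finset.mem_union] at hwB
      push_neg at hwB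
      obtain ⟨hwB1, hwB2⟩ := hwB
      have hcol : ∀ b ∈ s, ∀ a' ∈ s, ∀ b' ∈ s, (cycleGraph (2 * k + 1)).Adj x.1 b.1 →
          c s(w, g b) ≠ c s(g a', g b') := by
        intro b hb a' ha' b' hb' hadjb hceq
        apply hwB2
        rw [Finset.mem_biUnion]
        refine ⟨(b, a', b'), ?_, ?_⟩
        · rw [Finset.mem_filter]
          exact ⟨by simp [Finset.mem_product, hb, ha', hb'], hadjb⟩
        · rw [Finset.mem_filter]
          exact ⟨hwC, hceq⟩
      obtain ⟨g', hg'def⟩ : ∃ g', g' = Function.update g x w := ⟨_, rfl⟩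
      have hgx : g' x = w := by
        rw [hg'def]
        exact Function.update_self x w g
      have hgs : ∀ z ∈ s, g' z = g z := by
        intro z hz
        have hzx : z ≠ x := by
          rintro rfl
          exact hx hz
        rw [hg'def]
        exact Function.update_of_ne hzx w g
      have h1' : ∀ z, (g' z).1 = z.1 := by
        intro z
        by_cases h : z = x
        · subst h; rw [hgx, hw1]
        · rw [hg'def, Function.update_of_ne h]; exact hg1 z
      have h2' : ∀ z₁ ∈ insert x s, ∀ z₂ ∈ insert x s, g' z₁ = g' z₂ → z₁ = z₂ := by
        intro z₁ h₁ z₂ h₂ heq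
        by_cases e₁ : z₁ = x <;> by_cases e₂ : z₂ = x
        · rw [e₁, e₂]
        · have h₂' : z₂ ∈ s := (Finset.mem_insert.mp h₂).resolve_left e₂
          rw [e₁, hgx, hgs z₂ h₂'] at heq
          exact absurd (Finset.mem_image_of_mem g h₂') (heq ▸ hwB1)
        · have h₁' : z₁ ∈ s := (Finset.mem_insert.mp h₁).resolve_left e₁
          rw [e₂, hgx, hgs z₁ h₁'] at heq
          exact absurd (Finset.mem_image_of_mem g h₁') (heq.symm ▸ hwB1)
        · have h₁' : z₁ ∈ s := (Finset.mem_insert.mp h₁).resolve_left e₁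
          have h₂' : z₂ ∈ s := (Finset.mem_insert.mp h₂).resolve_left e₂
          rw [hgs z₁ h₁', hgs z₂ h₂'] at heq
          exact hg2 z₁ h₁' z₂ h₂' heq
      refine ⟨g', h1', h2', ?_⟩
      have main : ∀ a b a' b' : (Σ v : Fin (2 * k + 1), Fin (tm v)),
          (a = x ∧ b ∈ s ∨ a ∈ s ∧ b ∈ s) → (a' = x ∧ b' ∈ s ∨ a' ∈ s ∧ b' ∈ s) →
          (cycleGraph (2 * k + 1)).Adj a.1 b.1 → (cycleGraph (2 * k + 1)).Adj a'.1 b'.1 →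
          c s(g' a, g' b) = c s(g' a', g' b') →
          (s(a, b) : Sym2 (Σ v : Fin (2 * k + 1), Fin (tm v))) = s(a', b') := by
        rintro a b a' b' (⟨rfl, hb⟩ | ⟨ha, hb⟩) (⟨rfl, hb'⟩ | ⟨ha', hb'⟩) h1 h2 h3
        · -- both edges touch x
          rw [hgx, hgs b hb, hgs b' hb'] at h3
          have hwb : w ≠ g b := by
            intro h
            exact ((cycleGraph (2 * k + 1)).ne_of_adj h1) (by rw [← hw1, h, hg1])
          have hwb' : w ≠ g b' := by
            intro h
            exact ((cycleGraph (2 * k + 1)).ne_of_adj h2) (by rw [← hw1, h, hg1])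
          have hgb : g b = g b' := by
            by_contra hne
            have hE1 : s(w, g b) ∈ (blowup (cycleGraph (2 * k + 1)) tn).edgeSet := by
              rw [SimpleGraph.mem_edgeSet]
              show (cycleGraph (2 * k + 1)).Adj w.1 (g b).1
              rw [hw1, hg1]; exact h1
            have hE2 : s(w, g b') ∈ (blowup (cycleGraph (2 * k + 1)) tn).edgeSet := by
              rw [SimpleGraph.mem_edgeSet]
              show (cycleGraph (2 * k + 1)).Adj w.1 (g b').1
              rw [hw1, hg1]; exact h2
            have hEne : s(w, g b) ≠ s(w, g b') := by
              intro h
              rcases Sym2.eq_iff.mp h with ⟨_, h4⟩ | ⟨h4, _⟩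
              · exact hne h4
              · exact hwb' h4
            exact hc _ hE1 _ hE2 hEne ⟨w, by simp, by simp⟩ h3
          rw [hg2 b hb b' hb' hgb]
        · -- first edge touches x, second is old
          rw [hgx, hgs b hb, hgs a' ha', hgs b' hb'] at h3
          exact absurd h3 (hcol b hb a' ha' b' hb' h1)
        · -- first edge old, second touches x
          rw [hgs a ha, hgs b hb, hgx, hgs b' hb'] at h3
          exact absurd h3.symm (hcol b' hb' a ha b hb h2)
        · -- both old
          rw [hgs a ha, hgs b hb, hgs a' ha', hgs b' hb'] at h3
          exact hg3 a ha b hb a' ha' b' hb' h1 h2 h3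
      have norm : ∀ u v : (Σ v : Fin (2 * k + 1), Fin (tm v)),
          u ∈ insert x s → v ∈ insert x s → (cycleGraph (2 * k + 1)).Adj u.1 v.1 →
          (u = x ∧ v ∈ s) ∨ (v = x ∧ u ∈ s) ∨ (u ∈ s ∧ v ∈ s) := by
        intro u v hu hv huv
        rcases Finset.mem_insert.mp hu with rfl | hu'
        · rcases Finset.mem_insert.mp hv with rfl | hv'
          · exact absurd huv ((cycleGraph (2 * k + 1)).irrefl)
          · exact Or.inl ⟨rfl, hv'⟩
        · rcases Finset.mem_insert.mp hv with rfl | hv'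
          · exact Or.inr (Or.inl ⟨rfl, hu'⟩)
          · exact Or.inr (Or.inr ⟨hu', hv'⟩)
      have main1 : ∀ a b a' b' : (Σ v : Fin (2 * k + 1), Fin (tm v)),
          (a = x ∧ b ∈ s ∨ a ∈ s ∧ b ∈ s) →
          a' ∈ insert x s → b' ∈ insert x s →
          (cycleGraph (2 * k + 1)).Adj a.1 b.1 → (cycleGraph (2 * k + 1)).Adj a'.1 b'.1 →
          c s(g' a, g' b) = c s(g' a', g' b') →
          (s(a, b) : Sym2 (Σ v : Fin (2 * k + 1), Fin (tm v))) = s(a', b') := by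
        intro a b a' b' hP ha' hb' h1 h2 h3
        rcases norm a' b' ha' hb' h2 with ⟨rfl, h⟩ | ⟨rfl, h⟩ | ⟨h, h'⟩
        · exact main a b a' b' hP (Or.inl ⟨rfl, h⟩) h1 h2 h3
        · have e : (s(g' a', g' b') : Sym2 (Σ v : Fin (2 * k + 1), Fin (tn v)))
              = s(g' b', g' a') := Sym2.eq_swap
          rw [e] at h3
          have := main a b b' a' hP (Or.inl ⟨rfl, h⟩) h1 h2.symm h3
          exact this.trans Sym2.eq_swap
        · exact main a b a' b' hP (Or.inr ⟨h, h'⟩) h1 h2 h3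
      intro a ha b hb a' ha' b' hb' hab hab' hcc
      rcases norm a b ha hb hab with ⟨rfl, h⟩ | ⟨rfl, h⟩ | ⟨h, h'⟩
      · exact main1 a b a' b' (Or.inl ⟨rfl, h⟩) ha' hb' hab hab' hcc
      · have e : (s(g' a, g' b) : Sym2 (Σ v : Fin (2 * k + 1), Fin (tn v)))
            = s(g' b, g' a) := Sym2.eq_swap
        rw [e] at hcc
        have := main1 b a a' b' (Or.inl ⟨rfl, h⟩) ha' hb' hab.symm hab' hcc
        exact Sym2.eq_swap.trans this
      · exact main1 a b a' b' (Or.inr ⟨h, h'⟩) ha' hb' hab hab' hcc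
  obtain ⟨g, hg1, hg2, hg3⟩ := key Finset.univ
  refine ⟨⟨g, fun {a b} hab => ?_⟩, ?_, ?_⟩
  · show (cycleGraph (2 * k + 1)).Adj (g a).1 (g b).1
    rw [hg1, hg1]
    exact hab
  · intro z₁ z₂ h
    exact hg2 z₁ (Finset.mem_univ _) z₂ (Finset.mem_univ _) h
  · intro e₁ he₁ e₂ he₂ hcc
    revert he₁ he₂ hcc
    refine Sym2.inductionOn₂ e₁ e₂ (fun a b a' b' => ?_)
    intro he₁ he₂ hcc
    rw [SimpleGraph.mem_edgeSet] at he₁ he₂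
    rw [Sym2.map_pair_eq, Sym2.map_pair_eq] at hcc
    exact hg3 a (Finset.mem_univ _) b (Finset.mem_univ _) a' (Finset.mem_univ _)
      b' (Finset.mem_univ _) he₁ he₂ hcc
end

section
/- Let F be a bipartite graph with p(F) = s and let a, b be integers with a < s < b. Then ex(n, K_{a,b}, F) = (1+o(1))·N(K_{a,b}, K_{s-1, n-s+1}) as n → ∞. -/
set_option linter.unusedSectionVars false
set_option linter.unusedVariables false


open Filter SimpleGraph

open Finset SimpleGraph

namespace StmtAux

variable {V : Type} [Fintype V] [DecidableEq V]

open scoped Classical in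
noncomputable def cn (G : SimpleGraph V) (B : Finset V) : Finset V :=
  Finset.univ.filter fun v => ∀ u ∈ B, G.Adj v u

lemma mem_cn {G : SimpleGraph V} {B : Finset V} {v : V} :
    v ∈ cn G B ↔ ∀ u ∈ B, G.Adj v u := by
  classical
  simp [cn]

lemma disjoint_cn {G : SimpleGraph V} {B : Finset V} : Disjoint (cn G B) B := by
  rw [Finset.disjoint_left]
  intro v hv hvB
  exact (G.loopless.irrefl v) (mem_cn.1 hv v hvB)

open scoped Classical in
noncomputable def pairs (G : SimpleGraph V) (a b : ℕ) : Finset (Finset V × Finset V) :=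
  ((Finset.univ.powersetCard a) ×ˢ (Finset.univ.powersetCard b)).filter
    fun p => p.1 ⊆ cn G p.2

lemma mem_pairs {G : SimpleGraph V} {a b : ℕ} {p : Finset V × Finset V} :
    p ∈ pairs G a b ↔ p.1.card = a ∧ p.2.card = b ∧ p.1 ⊆ cn G p.2 := by
  classical
  simp [pairs, Finset.mem_powersetCard_univ, and_assoc]

lemma pairs_adj {G : SimpleGraph V} {a b : ℕ} {p : Finset V × Finset V}
    (hp : p ∈ pairs G a b) {u v : V} (hu : u ∈ p.1) (hv : v ∈ p.2) : G.Adj u v :=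
  mem_cn.1 ((mem_pairs.1 hp).2.2 hu) v hv

lemma pairs_disjoint {G : SimpleGraph V} {a b : ℕ} {p : Finset V × Finset V}
    (hp : p ∈ pairs G a b) : Disjoint p.1 p.2 :=
  Finset.disjoint_left.2 fun {v} hv hvB => (G.loopless.irrefl v) (pairs_adj hp hv hvB)

/-- The complete bipartite subgraph of `G` spanned by `A`, `B`. -/
def bipSub (G : SimpleGraph V) (A B : Finset V) : G.Subgraph where
  verts := ↑(A ∪ B)
  Adj u v := ((u ∈ A ∧ v ∈ B) ∨ (v ∈ A ∧ u ∈ B)) ∧ G.Adj u v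
  adj_sub h := h.2
  edge_vert {u v} h := by
    rcases h.1 with ⟨h1, _⟩ | ⟨_, h2⟩
    · simp [h1]
    · simp [h2]
  symm := ⟨fun u v h => ⟨h.1.symm, h.2.symm⟩⟩

lemma bipSub_adj {G : SimpleGraph V} {A B : Finset V} {u v : V} :
    (bipSub G A B).Adj u v ↔ ((u ∈ A ∧ v ∈ B) ∨ (v ∈ A ∧ u ∈ B)) ∧ G.Adj u v := Iff.rfl

end StmtAux

namespace StmtAux

variable {V : Type} [Fintype V] [DecidableEq V]

noncomputable def pairIso (G : SimpleGraph V) {a b : ℕ} {A B : Finset V}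
    (hA : A.card = a) (hB : B.card = b) (hd : Disjoint A B)
    (hadj : ∀ u ∈ A, ∀ v ∈ B, G.Adj u v) :
    completeBipartiteGraph (Fin a) (Fin b) ≃g (bipSub G A B).coe := by
  classical
  let eA : Fin a ≃ {x // x ∈ A} := (A.equivFinOfCardEq hA).symm
  let eB : Fin b ≃ {x // x ∈ B} := (B.equivFinOfCardEq hB).symm
  let f : Fin a ⊕ Fin b → (bipSub G A B).verts := fun x =>
    Sum.elim (fun i => ⟨(eA i : V), Finset.mem_coe.2 (Finset.mem_union_left _ (eA i).2)⟩)
             (fun j => ⟨(eB j : V), Finset.mem_coe.2 (Finset.mem_union_right _ (eB j).2)⟩) x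
  have hdisj : ∀ v : V, v ∈ A → v ∈ B → False := fun v h1 h2 =>
    Finset.disjoint_left.1 hd h1 h2
  have hinj : Function.Injective f := by
    rintro (i | i) (j | j) h
    · simp only [f, Sum.elim_inl, Subtype.mk.injEq] at h
      exact congrArg Sum.inl (eA.injective (Subtype.ext (congrArg (Subtype.val : (bipSub G A B).verts → V) h)))
    · simp only [f, Sum.elim_inl, Sum.elim_inr, Subtype.mk.injEq] at h
      exact absurd (((congrArg Subtype.val h) ▸ (eA i).2) : (eB j : V) ∈ A) (fun hc => hdisj _ hc (eB j).2)
    · simp only [f, Sum.elim_inl, Sum.elim_inr, Subtype.mk.injEq] at h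
      exact absurd (((congrArg Subtype.val h) ▸ (eB i).2) : (eA j : V) ∈ B) (fun hc => hdisj _ (eA j).2 hc)
    · simp only [f, Sum.elim_inr, Subtype.mk.injEq] at h
      exact congrArg Sum.inr (eB.injective (Subtype.ext (congrArg (Subtype.val : (bipSub G A B).verts → V) h)))
  have hsurj : Function.Surjective f := by
    rintro ⟨v, hv⟩
    rcases Finset.mem_union.1 (Finset.mem_coe.1 hv) with h | h
    · exact ⟨Sum.inl (eA.symm ⟨v, h⟩), Subtype.ext (by simp [f])⟩
    · exact ⟨Sum.inr (eB.symm ⟨v, h⟩), Subtype.ext (by simp [f])⟩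
  refine ⟨Equiv.ofBijective f ⟨hinj, hsurj⟩, ?_⟩
  rintro (i | i) (j | j)
  · simp only [Equiv.ofBijective_apply, Subgraph.coe_adj, bipSub_adj, completeBipartiteGraph]
    constructor
    · rintro ⟨⟨h1, h2⟩ | ⟨h1, h2⟩, _⟩
      · exact absurd h2 (fun hc => hdisj _ (eA j).2 hc)
      · exact absurd h2 (fun hc => hdisj _ (eA i).2 hc)
    · intro h
      simp at h
  · simp only [Equiv.ofBijective_apply, Subgraph.coe_adj, bipSub_adj, completeBipartiteGraph]
    refine iff_of_true ⟨Or.inl ⟨(eA i).2, (eB j).2⟩, hadj _ (eA i).2 _ (eB j).2⟩ ?_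
    simp
  · simp only [Equiv.ofBijective_apply, Subgraph.coe_adj, bipSub_adj, completeBipartiteGraph]
    refine iff_of_true ⟨Or.inr ⟨(eA j).2, (eB i).2⟩, (hadj _ (eA j).2 _ (eB i).2).symm⟩ ?_
    simp
  · simp only [Equiv.ofBijective_apply, Subgraph.coe_adj, bipSub_adj, completeBipartiteGraph]
    constructor
    · rintro ⟨⟨h1, h2⟩ | ⟨h1, h2⟩, _⟩
      · exact absurd h1 (fun hc => hdisj _ hc (eB i).2)
      · exact absurd h1 (fun hc => hdisj _ hc (eB j).2)
    · intro h
      simp at h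

end StmtAux

namespace StmtAux

variable {V : Type} [Fintype V] [DecidableEq V]

lemma copies_eq (G : SimpleGraph V) {a b : ℕ} (hab : a < b) :
    {H' : G.Subgraph | Nonempty (completeBipartiteGraph (Fin a) (Fin b) ≃g H'.coe)}
      = (fun p : Finset V × Finset V => bipSub G p.1 p.2) '' ↑(pairs G a b) := by
  ext H'
  simp only [Set.mem_setOf_eq, Set.mem_image, Finset.mem_coe]
  constructor
  · rintro ⟨e⟩
    set A : Finset V := Finset.univ.image (fun i : Fin a => ((e (Sum.inl i)) : V)) with hAdef
    set B : Finset V := Finset.univ.image (fun j : Fin b => ((e (Sum.inr j)) : V)) with hBdef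
    have hinjA : Function.Injective (fun i : Fin a => ((e (Sum.inl i)) : V)) := by
      intro i j h
      have := e.injective (Subtype.ext h)
      exact Sum.inl_injective this
    have hinjB : Function.Injective (fun j : Fin b => ((e (Sum.inr j)) : V)) := by
      intro i j h
      have := e.injective (Subtype.ext h)
      exact Sum.inr_injective this
    have hAcard : A.card = a := by
      rw [hAdef, Finset.card_image_of_injective _ hinjA, Finset.card_univ, Fintype.card_fin]
    have hBcard : B.card = b := by
      rw [hBdef, Finset.card_image_of_injective _ hinjB, Finset.card_univ, Fintype.card_fin]
    have hadj : ∀ u ∈ A, ∀ v ∈ B, H'.Adj u v := by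
      intro u hu v hv
      obtain ⟨i, -, rfl⟩ := Finset.mem_image.1 hu
      obtain ⟨j, -, rfl⟩ := Finset.mem_image.1 hv
      have : (completeBipartiteGraph (Fin a) (Fin b)).Adj (Sum.inl i) (Sum.inr j) := by
        simp [completeBipartiteGraph]
      exact e.map_rel_iff.2 this
    have hmemA : ∀ u ∈ A, u ∈ H'.verts := by
      intro u hu
      obtain ⟨i, -, rfl⟩ := Finset.mem_image.1 hu
      exact (e (Sum.inl i)).2
    have hmemB : ∀ v ∈ B, v ∈ H'.verts := by
      intro v hv
      obtain ⟨j, -, rfl⟩ := Finset.mem_image.1 hv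
      exact (e (Sum.inr j)).2
    refine ⟨(A, B), ?_, ?_⟩
    · refine mem_pairs.2 ⟨hAcard, hBcard, fun {u} hu => mem_cn.2 fun v hv => ?_⟩
      exact H'.adj_sub (hadj u hu v hv)
    · -- H' = bipSub G A B, i.e. bipSub G A B = H' reversed
      ext1
      case verts =>
        ext v
        simp only [bipSub, Finset.coe_union, Set.mem_union, Finset.mem_coe]
        constructor
        · rintro (h | h)
          · exact hmemA v h
          · exact hmemB v h
        · intro hv
          rcases hx : e.symm ⟨v, hv⟩ with i | j
          · left
            have : e (Sum.inl i) = ⟨v, hv⟩ := by rw [← hx, RelIso.apply_symm_apply]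
            exact Finset.mem_image.2 ⟨i, Finset.mem_univ _, by rw [this]⟩
          · right
            have : e (Sum.inr j) = ⟨v, hv⟩ := by rw [← hx, RelIso.apply_symm_apply]
            exact Finset.mem_image.2 ⟨j, Finset.mem_univ _, by rw [this]⟩
      case Adj =>
        ext u v
        simp only [bipSub]
        constructor
        · rintro ⟨h1 | h1, h2⟩
          · exact hadj u h1.1 v h1.2
          · exact (hadj v h1.1 u h1.2).symm
        · intro h
          have hu : u ∈ H'.verts := H'.edge_vert h
          have hv : v ∈ H'.verts := H'.edge_vert h.symm
          have hcoe : H'.coe.Adj ⟨u, hu⟩ ⟨v, hv⟩ := h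
          have hK : (completeBipartiteGraph (Fin a) (Fin b)).Adj
              (e.symm ⟨u, hu⟩) (e.symm ⟨v, hv⟩) := by
            rw [← e.map_rel_iff, RelIso.apply_symm_apply, RelIso.apply_symm_apply]
            exact hcoe
          have hgoalA : ∀ (i : Fin a), e.symm ⟨u, hu⟩ = Sum.inl i → u ∈ A := by
            intro i hi
            have : e (Sum.inl i) = ⟨u, hu⟩ := by rw [← hi, RelIso.apply_symm_apply]
            exact Finset.mem_image.2 ⟨i, Finset.mem_univ _, by rw [this]⟩
          have hgoalB : ∀ (j : Fin b), e.symm ⟨u, hu⟩ = Sum.inr j → u ∈ B := by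
            intro j hj
            have : e (Sum.inr j) = ⟨u, hu⟩ := by rw [← hj, RelIso.apply_symm_apply]
            exact Finset.mem_image.2 ⟨j, Finset.mem_univ _, by rw [this]⟩
          have hgoalA' : ∀ (i : Fin a), e.symm ⟨v, hv⟩ = Sum.inl i → v ∈ A := by
            intro i hi
            have : e (Sum.inl i) = ⟨v, hv⟩ := by rw [← hi, RelIso.apply_symm_apply]
            exact Finset.mem_image.2 ⟨i, Finset.mem_univ _, by rw [this]⟩
          have hgoalB' : ∀ (j : Fin b), e.symm ⟨v, hv⟩ = Sum.inr j → v ∈ B := by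
            intro j hj
            have : e (Sum.inr j) = ⟨v, hv⟩ := by rw [← hj, RelIso.apply_symm_apply]
            exact Finset.mem_image.2 ⟨j, Finset.mem_univ _, by rw [this]⟩
          refine ⟨?_, H'.adj_sub h⟩
          rcases hx : e.symm ⟨u, hu⟩ with i | j <;> rcases hy : e.symm ⟨v, hv⟩ with i' | j'
          · rw [hx, hy] at hK; simp [completeBipartiteGraph] at hK
          · exact Or.inl ⟨hgoalA i hx, hgoalB' j' hy⟩
          · exact Or.inr ⟨hgoalA' i' hy, hgoalB j hx⟩
          · rw [hx, hy] at hK; simp [completeBipartiteGraph] at hK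
  · rintro ⟨p, hp, rfl⟩
    exact ⟨pairIso G (mem_pairs.1 hp).1 (mem_pairs.1 hp).2.1 (pairs_disjoint hp)
      (fun u hu v hv => pairs_adj hp hu hv)⟩

end StmtAux

namespace StmtAux

variable {V : Type} [Fintype V] [DecidableEq V]

lemma bipSub_injOn (G : SimpleGraph V) {a b : ℕ} (hab : a < b) :
    Set.InjOn (fun p : Finset V × Finset V => bipSub G p.1 p.2) ↑(pairs G a b) := by
  intro p hp q hq heq
  simp only [Finset.mem_coe] at hp hq
  replace heq : bipSub G p.1 p.2 = bipSub G q.1 q.2 := heq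
  have hverts : p.1 ∪ p.2 = q.1 ∪ q.2 :=
    Finset.coe_injective (congrArg Subgraph.verts heq)
  have hAdj : ∀ u v, (bipSub G p.1 p.2).Adj u v ↔ (bipSub G q.1 q.2).Adj u v := by
    intro u v; rw [heq]
  have key : ∀ (r t : Finset V × Finset V), r ∈ pairs G a b → t ∈ pairs G a b →
      r.1 ∪ r.2 = t.1 ∪ t.2 →
      (∀ u v, (bipSub G r.1 r.2).Adj u v ↔ (bipSub G t.1 t.2).Adj u v) →
      r.2 ⊆ t.2 := by
    intro r t hr ht hu hA v hv
    have hvr1 : v ∉ r.1 := Finset.disjoint_right.1 (pairs_disjoint hr) hv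
    have hvmem : v ∈ t.1 ∪ t.2 := by rw [← hu]; exact Finset.mem_union_right _ hv
    rcases Finset.mem_union.1 hvmem with hv1 | hv2
    · exfalso
      have hvt2 : v ∉ t.2 := Finset.disjoint_left.1 (pairs_disjoint ht) hv1
      have h1 : ∀ u, (bipSub G r.1 r.2).Adj u v ↔ u ∈ r.1 := by
        intro u
        constructor
        · rintro ⟨⟨h1, _⟩ | ⟨h1, _⟩, _⟩
          · exact h1
          · exact absurd h1 hvr1
        · intro hu1
          exact ⟨Or.inl ⟨hu1, hv⟩, pairs_adj hr hu1 hv⟩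
      have h2 : ∀ u, (bipSub G t.1 t.2).Adj u v ↔ u ∈ t.2 := by
        intro u
        constructor
        · rintro ⟨⟨_, h2⟩ | ⟨_, h2⟩, _⟩
          · exact absurd h2 hvt2
          · exact h2
        · intro hu2
          exact ⟨Or.inr ⟨hv1, hu2⟩, (pairs_adj ht hv1 hu2).symm⟩
      have heq12 : r.1 = t.2 := Finset.ext fun u => by rw [← h1 u, hA u v, h2 u]
      have : a = b := by
        rw [← (mem_pairs.1 hr).1, heq12, (mem_pairs.1 ht).2.1]
      exact hab.ne this
    · exact hv2
  have h2 : p.2 = q.2 :=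
    Finset.Subset.antisymm (key p q hp hq hverts hAdj)
      (key q p hq hp hverts.symm fun u v => (hAdj u v).symm)
  have h1 : p.1 = q.1 := by
    ext u
    constructor
    · intro hu
      have hmem : u ∈ q.1 ∪ q.2 := by rw [← hverts]; exact Finset.mem_union_left _ hu
      rcases Finset.mem_union.1 hmem with h | h
      · exact h
      · exact absurd (by rw [h2]; exact h) (Finset.disjoint_left.1 (pairs_disjoint hp) hu)
    · intro hu
      have hmem : u ∈ p.1 ∪ p.2 := by rw [hverts]; exact Finset.mem_union_left _ hu
      rcases Finset.mem_union.1 hmem with h | h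
      · exact h
      · exact absurd (by rw [← h2]; exact h) (Finset.disjoint_left.1 (pairs_disjoint hq) hu)
  exact Prod.ext h1 h2

lemma copyCount_eq_pairs_card (G : SimpleGraph V) {a b : ℕ} (hab : a < b) :
    _root_.copyCount (completeBipartiteGraph (Fin a) (Fin b)) G = (pairs G a b).card := by
  rw [_root_.copyCount, copies_eq G hab, Set.ncard_image_of_injOn (bipSub_injOn G hab),
    Set.ncard_coe_finset]

lemma pairs_eq_biUnion (G : SimpleGraph V) (a b : ℕ) :
    pairs G a b = (Finset.univ.powersetCard b).biUnion
      (fun B => ((cn G B).powersetCard a).image (fun A => (A, B))) := by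
  classical
  ext p
  simp only [mem_pairs, Finset.mem_biUnion, Finset.mem_image,
    Finset.mem_powersetCard_univ, Finset.mem_powersetCard]
  constructor
  · rintro ⟨h1, h2, h3⟩
    exact ⟨p.2, ⟨Finset.subset_univ _, h2⟩, p.1, ⟨h3, h1⟩, rfl⟩
  · rintro ⟨B, ⟨-, hB⟩, A, ⟨hsub, hcard⟩, rfl⟩
    exact ⟨hcard, hB, hsub⟩

lemma pairs_card_eq_sum (G : SimpleGraph V) (a b : ℕ) :
    (pairs G a b).card
      = ∑ B ∈ Finset.univ.powersetCard b, ((cn G B).card.choose a) := by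
  classical
  rw [pairs_eq_biUnion G a b, Finset.card_biUnion]
  · refine Finset.sum_congr rfl fun B _ => ?_
    rw [Finset.card_image_of_injective _ (fun A A' h => (Prod.ext_iff.1 h).1),
      Finset.card_powersetCard]
  · intro B _ B' _ hne
    rw [Function.onFun, Finset.disjoint_left]
    rintro p hp hp'
    obtain ⟨A, -, rfl⟩ := Finset.mem_image.1 hp
    obtain ⟨A', -, h⟩ := Finset.mem_image.1 hp'
    exact hne (Prod.ext_iff.1 h).2.symm

lemma cn_anti (G : SimpleGraph V) {S B : Finset V} (h : S ⊆ B) : cn G B ⊆ cn G S :=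
  fun v hv => mem_cn.2 fun u hu => mem_cn.1 hv u (h hu)

lemma pairs_card_upper (G : SimpleGraph V) (a : ℕ) {b s c : ℕ} (hsb : s ≤ b)
    (hfree : ∀ S : Finset V, S.card = s → (cn G S).card ≤ c) :
    (pairs G a b).card ≤ (Fintype.card V).choose b * ((s - 1).choose a)
      + (Fintype.card V).choose s * (c.choose b * c.choose a) := by
  classical
  rw [pairs_card_eq_sum]
  rw [← Finset.sum_filter_add_sum_filter_not (Finset.univ.powersetCard b)
    (fun B => s ≤ (cn G B).card)]
  have hbadterm : ∀ B ∈ (Finset.univ.powersetCard b).filter (fun B => s ≤ (cn G B).card),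
      ((cn G B).card.choose a) ≤ c.choose a := by
    intro B hB
    obtain ⟨hB1, -⟩ := Finset.mem_filter.1 hB
    have hBcard : B.card = b := (Finset.mem_powersetCard_univ.1 hB1)
    obtain ⟨S, hSsub, hScard⟩ := Finset.exists_subset_card_eq (s := B) (n := s) (hBcard ▸ hsb)
    exact Nat.choose_le_choose a ((Finset.card_le_card (cn_anti G hSsub)).trans
      (hfree S hScard))
  have hbadcard : ((Finset.univ.powersetCard b).filter (fun B => s ≤ (cn G B).card)).card
      ≤ (Fintype.card V).choose s * c.choose b := by
    have hsubset : (Finset.univ.powersetCard b).filter (fun B => s ≤ (cn G B).card)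
        ⊆ (Finset.univ.powersetCard s).biUnion (fun S => (cn G S).powersetCard b) := by
      intro B hB
      obtain ⟨hB1, hB2⟩ := Finset.mem_filter.1 hB
      have hBcard : B.card = b := Finset.mem_powersetCard_univ.1 hB1
      obtain ⟨S, hSsub, hScard⟩ := Finset.exists_subset_card_eq (s := cn G B) (n := s) hB2
      refine Finset.mem_biUnion.2 ⟨S, Finset.mem_powersetCard_univ.2 hScard, ?_⟩
      refine Finset.mem_powersetCard.2 ⟨fun v hv => mem_cn.2 fun u hu => ?_, hBcard⟩
      exact (mem_cn.1 (hSsub hu) v hv).symm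
    calc ((Finset.univ.powersetCard b).filter (fun B => s ≤ (cn G B).card)).card
        ≤ _ := Finset.card_le_card hsubset
      _ ≤ ∑ S ∈ Finset.univ.powersetCard s, ((cn G S).powersetCard b).card :=
          Finset.card_biUnion_le
      _ ≤ ∑ S ∈ Finset.univ.powersetCard s, c.choose b := by
          refine Finset.sum_le_sum fun S hS => ?_
          rw [Finset.card_powersetCard]
          exact Nat.choose_le_choose b (hfree S (Finset.mem_powersetCard_univ.1 hS))
      _ = (Fintype.card V).choose s * c.choose b := by
          rw [Finset.sum_const, smul_eq_mul, Finset.card_powersetCard, Finset.card_univ]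
  have hgoodterm : ∀ B ∈ (Finset.univ.powersetCard b).filter
      (fun B => ¬ s ≤ (cn G B).card), ((cn G B).card.choose a) ≤ (s - 1).choose a := by
    intro B hB
    obtain ⟨-, hB2⟩ := Finset.mem_filter.1 hB
    exact Nat.choose_le_choose a (Nat.le_pred_of_lt (Nat.lt_of_not_le hB2))
  calc (∑ B ∈ (Finset.univ.powersetCard b).filter (fun B => s ≤ (cn G B).card),
          ((cn G B).card.choose a))
        + ∑ B ∈ (Finset.univ.powersetCard b).filter (fun B => ¬ s ≤ (cn G B).card),
          ((cn G B).card.choose a)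
      ≤ ((Fintype.card V).choose s * c.choose b) * (c.choose a)
        + (Fintype.card V).choose b * ((s - 1).choose a) := by
        gcongr
        · calc ∑ B ∈ (Finset.univ.powersetCard b).filter (fun B => s ≤ (cn G B).card),
              ((cn G B).card.choose a)
              ≤ ∑ B ∈ (Finset.univ.powersetCard b).filter (fun B => s ≤ (cn G B).card),
                c.choose a := Finset.sum_le_sum hbadterm
            _ ≤ _ := by
                rw [Finset.sum_const, smul_eq_mul]
                exact Nat.mul_le_mul_right _ hbadcard
        · calc ∑ B ∈ (Finset.univ.powersetCard b).filter (fun B => ¬ s ≤ (cn G B).card),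
              ((cn G B).card.choose a)
              ≤ ∑ B ∈ (Finset.univ.powersetCard b).filter (fun B => ¬ s ≤ (cn G B).card),
                (s - 1).choose a := Finset.sum_le_sum hgoodterm
            _ ≤ _ := by
                rw [Finset.sum_const, smul_eq_mul]
                refine Nat.mul_le_mul_right _ ?_
                refine (Finset.card_filter_le _ _).trans (le_of_eq ?_)
                rw [Finset.card_powersetCard, Finset.card_univ]
    _ = (Fintype.card V).choose b * ((s - 1).choose a)
        + (Fintype.card V).choose s * (c.choose b * c.choose a) := by ring

end StmtAux

namespace StmtAux

variable {V : Type} [Fintype V] [DecidableEq V]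

lemma pairs_card_lower (G : SimpleGraph V) (a b : ℕ) (L R : Finset V)
    (hadj : ∀ u ∈ L, ∀ v ∈ R, G.Adj u v) :
    L.card.choose a * R.card.choose b ≤ (pairs G a b).card := by
  classical
  have hsub : (L.powersetCard a) ×ˢ (R.powersetCard b) ⊆ pairs G a b := by
    rintro ⟨A, B⟩ hp
    obtain ⟨hA, hB⟩ := Finset.mem_product.1 hp
    obtain ⟨hAsub, hAcard⟩ := Finset.mem_powersetCard.1 hA
    obtain ⟨hBsub, hBcard⟩ := Finset.mem_powersetCard.1 hB
    exact mem_pairs.2 ⟨hAcard, hBcard,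
      fun {u} hu => mem_cn.2 fun v hv => hadj u (hAsub hu) v (hBsub hv)⟩
  calc L.card.choose a * R.card.choose b
      = ((L.powersetCard a) ×ˢ (R.powersetCard b)).card := by
        rw [Finset.card_product, Finset.card_powersetCard, Finset.card_powersetCard]
    _ ≤ _ := Finset.card_le_card hsub

variable {α : Type} [Fintype α] {F : SimpleGraph α} {s : ℕ}

lemma not_contains_of_coloring (hs : IsLeast (smallerClassSizes F) s)
    (G : SimpleGraph V) (π : V → Bool)
    (hproper : ∀ u v, G.Adj u v → π u ≠ π v)
    (hsmall : (Finset.univ.filter fun v => π v = true).card < s) :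
    ¬ Contains F G := by
  rintro ⟨f, hf⟩
  set χ : α → Bool := fun x => π (f x) with hχ
  have hmem : min (Finset.univ.filter fun x => χ x = true).card
      (Finset.univ.filter fun x => χ x = false).card ∈ smallerClassSizes F :=
    ⟨χ, fun u v huv => hproper _ _ (f.map_rel huv), rfl⟩
  have hle := hs.2 hmem
  have hc1 : (Finset.univ.filter fun x => χ x = true).card
      ≤ (Finset.univ.filter fun v => π v = true).card := by
    refine Finset.card_le_card_of_injOn f (fun x hx => ?_) (Function.Injective.injOn hf)
    simp only [Finset.mem_coe, Finset.mem_filter, Finset.mem_univ, true_and] at hx ⊢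
    exact hx
  have := min_le_left (Finset.univ.filter fun x => χ x = true).card
      (Finset.univ.filter fun x => χ x = false).card
  omega

lemma contains_of_cn (hs : IsLeast (smallerClassSizes F) s)
    (G : SimpleGraph V) (S : Finset V) (hScard : S.card = s)
    (hcn : Fintype.card α - s ≤ (cn G S).card) : Contains F G := by
  classical
  obtain ⟨χ, hproper, hmin⟩ := hs.1
  -- pick the colour class of size s
  have hneg : ∀ c : Bool, (Finset.univ.filter fun x => χ x = !c)
      = (Finset.univ.filter fun x => ¬ χ x = c) := by
    intro c
    ext x
    simp only [Finset.mem_filter, Finset.mem_univ, true_and]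
    exact Bool.eq_not_iff
  have hsplit : ∀ c : Bool, (Finset.univ.filter fun x => χ x = c).card
      + (Finset.univ.filter fun x => χ x = !c).card = Fintype.card α := by
    intro c
    rw [hneg c, Finset.card_filter_add_card_filter_not, Finset.card_univ]
  obtain ⟨c, hc⟩ : ∃ c : Bool, (Finset.univ.filter fun x => χ x = c).card = s := by
    rcases le_total (Finset.univ.filter fun x => χ x = true).card
      (Finset.univ.filter fun x => χ x = false).card with h | h
    · exact ⟨true, by omega⟩
    · exact ⟨false, by omega⟩
  have hc' : (Finset.univ.filter fun x => χ x = !c).card = Fintype.card α - s := by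
    have := hsplit c
    omega
  have hcard1 : Fintype.card {x // χ x = c} = Fintype.card {v // v ∈ S} := by
    rw [Fintype.card_subtype, hc, Fintype.card_coe, hScard]
  have hcard2 : Fintype.card {x // ¬ χ x = c} ≤ Fintype.card {v // v ∈ cn G S} := by
    rw [Fintype.card_subtype, Fintype.card_coe, ← hneg c]
    omega
  let e1 : {x // χ x = c} ≃ {v // v ∈ S} := Fintype.equivOfCardEq hcard1
  obtain ⟨e2⟩ := Function.Embedding.nonempty_of_card_le hcard2
  let f : α → V := fun x => if h : χ x = c then (e1 ⟨x, h⟩ : V) else (e2 ⟨x, h⟩ : V)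
  have hfS : ∀ x (h : χ x = c), f x ∈ S := by
    intro x h; simp only [f, dif_pos h]; exact (e1 ⟨x, h⟩).2
  have hfT : ∀ x (h : ¬ χ x = c), f x ∈ cn G S := by
    intro x h; simp only [f, dif_neg h]; exact (e2 ⟨x, h⟩).2
  have hdisj : ∀ v, v ∈ S → v ∈ cn G S → False := fun v h1 h2 =>
    Finset.disjoint_right.1 disjoint_cn h1 h2
  have hadjf : ∀ u v, F.Adj u v → G.Adj (f u) (f v) := by
    intro u v huv
    have hne := hproper u v huv
    by_cases hu : χ u = c <;> by_cases hv : χ v = c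
    · exact absurd (hu.trans hv.symm) hne
    · exact ((mem_cn.1 (hfT v hv)) _ (hfS u hu)).symm
    · exact (mem_cn.1 (hfT u hu)) _ (hfS v hv)
    · exact absurd ((Bool.eq_not_iff.2 hu).trans (Bool.eq_not_iff.2 hv).symm) hne
  have hinj : Function.Injective f := by
    intro x y hxy
    by_cases hx : χ x = c <;> by_cases hy : χ y = c
    · have : e1 ⟨x, hx⟩ = e1 ⟨y, hy⟩ := Subtype.ext (by
        simpa only [f, dif_pos hx, dif_pos hy] using hxy)
      simpa using congrArg Subtype.val (e1.injective this)
    · exfalso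
      refine hdisj (f x) ?_ ?_
      · exact hfS x hx
      · rw [hxy]; exact hfT y hy
    · exfalso
      refine hdisj (f y) ?_ ?_
      · exact hfS y hy
      · rw [← hxy]; exact hfT x hx
    · have : e2 ⟨x, hx⟩ = e2 ⟨y, hy⟩ := Subtype.ext (by
        simpa only [f, dif_neg hx, dif_neg hy] using hxy)
      simpa using congrArg Subtype.val (e2.injective this)
  exact ⟨⟨f, fun {u v} h => hadjf u v h⟩, hinj⟩

lemma cn_card_le_of_free (hs : IsLeast (smallerClassSizes F) s)
    (G : SimpleGraph V) (hfree : ¬ Contains F G) (S : Finset V) (hScard : S.card = s) :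
    (cn G S).card ≤ Fintype.card α - s - 1 := by
  by_contra h
  exact hfree (contains_of_cn hs G S hScard (by omega))

end StmtAux

namespace StmtAux

lemma key_bounds {α : Type} [Fintype α] {F : SimpleGraph α} {s : ℕ}
    (hs : IsLeast (smallerClassSizes F) s) {a b : ℕ} (has : a < s) (hsb : s < b)
    {n : ℕ} (hn : s ≤ n) :
    ((s-1).choose a * (n-s+1).choose b
        ≤ _root_.copyCount (completeBipartiteGraph (Fin a) (Fin b))
            (completeBipartiteGraph (Fin (s - 1)) (Fin (n - s + 1)))) ∧
    (_root_.copyCount (completeBipartiteGraph (Fin a) (Fin b))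
        (completeBipartiteGraph (Fin (s - 1)) (Fin (n - s + 1)))
      ≤ n.choose b * ((s-1).choose a)
        + n.choose s * ((Fintype.card α - s - 1).choose b
            * (Fintype.card α - s - 1).choose a)) ∧
    ((s-1).choose a * (n-s+1).choose b
      ≤ sSup {N : ℕ | ∃ G : SimpleGraph (Fin n), ¬ Contains F G ∧
          _root_.copyCount (completeBipartiteGraph (Fin a) (Fin b)) G = N}) ∧
    (sSup {N : ℕ | ∃ G : SimpleGraph (Fin n), ¬ Contains F G ∧
          _root_.copyCount (completeBipartiteGraph (Fin a) (Fin b)) G = N}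
      ≤ n.choose b * ((s-1).choose a)
        + n.choose s * ((Fintype.card α - s - 1).choose b
            * (Fintype.card α - s - 1).choose a)) := by
  classical
  have hab : a < b := has.trans hsb
  have hs1 : 1 ≤ s := Nat.one_le_iff_ne_zero.2 (fun h => by omega)
  set Host := completeBipartiteGraph (Fin (s - 1)) (Fin (n - s + 1)) with hHost
  set L : Finset (Fin (s-1) ⊕ Fin (n-s+1)) := (Finset.univ).image Sum.inl with hLdef
  set R : Finset (Fin (s-1) ⊕ Fin (n-s+1)) := (Finset.univ).image Sum.inr with hRdef
  have hLcard : L.card = s - 1 := by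
    rw [hLdef, Finset.card_image_of_injective _ Sum.inl_injective, Finset.card_univ,
      Fintype.card_fin]
  have hRcard : R.card = n - s + 1 := by
    rw [hRdef, Finset.card_image_of_injective _ Sum.inr_injective, Finset.card_univ,
      Fintype.card_fin]
  have hadjLR : ∀ u ∈ L, ∀ v ∈ R, Host.Adj u v := by
    intro u hu v hv
    obtain ⟨i, -, rfl⟩ := Finset.mem_image.1 hu
    obtain ⟨j, -, rfl⟩ := Finset.mem_image.1 hv
    simp [hHost, completeBipartiteGraph]
  have hcardW : Fintype.card (Fin (s-1) ⊕ Fin (n-s+1)) = n := by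
    rw [Fintype.card_sum, Fintype.card_fin, Fintype.card_fin]
    omega
  have host_free : ¬ Contains F Host := by
    refine not_contains_of_coloring hs Host (fun v => v.isLeft) ?_ ?_
    · rintro (u | u) (v | v) huv <;> simp_all [hHost, completeBipartiteGraph]
    · have hfil : (Finset.univ.filter fun v : Fin (s-1) ⊕ Fin (n-s+1) =>
          v.isLeft = true) = L := by
        ext (v | v) <;> simp [hLdef]
      rw [hfil, hLcard]
      omega
  have host_lower : (s-1).choose a * (n-s+1).choose b
      ≤ _root_.copyCount (completeBipartiteGraph (Fin a) (Fin b)) Host := by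
    rw [copyCount_eq_pairs_card Host hab]
    have := pairs_card_lower Host a b L R hadjLR
    rwa [hLcard, hRcard] at this
  have host_upper : _root_.copyCount (completeBipartiteGraph (Fin a) (Fin b)) Host
      ≤ n.choose b * ((s-1).choose a)
        + n.choose s * ((Fintype.card α - s - 1).choose b
            * (Fintype.card α - s - 1).choose a) := by
    rw [copyCount_eq_pairs_card Host hab]
    have h := pairs_card_upper Host a hsb.le
      (fun S hS => cn_card_le_of_free hs Host host_free S hS)
    rwa [hcardW] at h
  have hsum : (s - 1) + (n - s + 1) = n := by omega
  set e : (Fin (s-1) ⊕ Fin (n-s+1)) ≃ Fin n :=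
    finSumFinEquiv.trans (finCongr hsum) with hedef
  set Gn : SimpleGraph (Fin n) := SimpleGraph.comap (⇑e.symm) Host with hGn
  let homGn : Gn →g Host := ⟨⇑e.symm, fun h => h⟩
  have Gn_free : ¬ Contains F Gn := by
    rintro ⟨f, hf⟩
    refine host_free ⟨homGn.comp f, ?_⟩
    have : ⇑(homGn.comp f) = ⇑e.symm ∘ ⇑f := rfl
    rw [this]
    exact (Equiv.injective e.symm).comp hf
  have Gn_lower : (s-1).choose a * (n-s+1).choose b
      ≤ _root_.copyCount (completeBipartiteGraph (Fin a) (Fin b)) Gn := by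
    rw [copyCount_eq_pairs_card Gn hab]
    have hadj' : ∀ u ∈ L.image e, ∀ v ∈ R.image e, Gn.Adj u v := by
      intro u hu v hv
      obtain ⟨x, hx, rfl⟩ := Finset.mem_image.1 hu
      obtain ⟨y, hy, rfl⟩ := Finset.mem_image.1 hv
      show Host.Adj (e.symm (e x)) (e.symm (e y))
      rw [Equiv.symm_apply_apply, Equiv.symm_apply_apply]
      exact hadjLR x hx y hy
    have := pairs_card_lower Gn a b (L.image e) (R.image e) hadj'
    rwa [Finset.card_image_of_injective _ e.injective, hLcard,
      Finset.card_image_of_injective _ e.injective, hRcard] at this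
  have hgeneric : ∀ G : SimpleGraph (Fin n), ¬ Contains F G →
      _root_.copyCount (completeBipartiteGraph (Fin a) (Fin b)) G
        ≤ n.choose b * ((s-1).choose a)
          + n.choose s * ((Fintype.card α - s - 1).choose b
              * (Fintype.card α - s - 1).choose a) := by
    intro G hG
    rw [copyCount_eq_pairs_card G hab]
    have h := pairs_card_upper G a hsb.le
      (fun S hS => cn_card_le_of_free hs G hG S hS)
    rwa [Fintype.card_fin] at h
  have hmem : _root_.copyCount (completeBipartiteGraph (Fin a) (Fin b)) Gn
      ∈ {N : ℕ | ∃ G : SimpleGraph (Fin n), ¬ Contains F G ∧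
          _root_.copyCount (completeBipartiteGraph (Fin a) (Fin b)) G = N} :=
    ⟨Gn, Gn_free, rfl⟩
  have hbdd : BddAbove {N : ℕ | ∃ G : SimpleGraph (Fin n), ¬ Contains F G ∧
      _root_.copyCount (completeBipartiteGraph (Fin a) (Fin b)) G = N} := by
    refine ⟨n.choose b * ((s-1).choose a)
      + n.choose s * ((Fintype.card α - s - 1).choose b
          * (Fintype.card α - s - 1).choose a), ?_⟩
    rintro N ⟨G, hG, rfl⟩
    exact hgeneric G hG
  refine ⟨host_lower, host_upper, le_trans Gn_lower (le_csSup hbdd hmem), ?_⟩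
  refine csSup_le ⟨_, hmem⟩ ?_
  rintro N ⟨G, hG, rfl⟩
  exact hgeneric G hG

end StmtAux

namespace StmtAux

open Filter

lemma tendsto_sub_const_atTop (c₀ : ℕ) :
    Tendsto (fun n : ℕ => (n:ℝ) - c₀) atTop atTop := by
  simpa [sub_eq_add_neg] using
    tendsto_atTop_add_const_right atTop (-(c₀:ℝ)) tendsto_natCast_atTop_atTop

lemma tendsto_ratio_pow (c₀ : ℕ) (k : ℕ) :
    Tendsto (fun n : ℕ => ((n:ℝ)/((n:ℝ) - c₀))^k) atTop (nhds 1) := by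
  have t1 := tendsto_sub_const_atTop c₀
  have t3 : Tendsto (fun n : ℕ => (c₀:ℝ)/((n:ℝ) - c₀)) atTop (nhds 0) := by
    simpa [div_eq_mul_inv] using tendsto_const_nhds.mul t1.inv_tendsto_atTop
  have t2 : Tendsto (fun n : ℕ => (n:ℝ)/((n:ℝ)-c₀)) atTop (nhds 1) := by
    have heq : ∀ᶠ n : ℕ in atTop, 1 + (c₀:ℝ)/((n:ℝ)-c₀) = (n:ℝ)/((n:ℝ)-c₀) := by
      filter_upwards [eventually_gt_atTop c₀] with n hn
      have hpos : (0:ℝ) < (n:ℝ) - c₀ := by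
        have : (c₀:ℝ) < n := by exact_mod_cast hn
        linarith
      field_simp
      ring
    refine Tendsto.congr' heq ?_
    simpa using tendsto_const_nhds.add t3
  simpa using t2.pow k

lemma tendsto_inv_pow_sub (c₀ : ℕ) {k : ℕ} (hk : k ≠ 0) :
    Tendsto (fun n : ℕ => ((((n:ℝ) - c₀))^k)⁻¹) atTop (nhds 0) :=
  Tendsto.inv_tendsto_atTop ((tendsto_pow_atTop hk).comp (tendsto_sub_const_atTop c₀))

end StmtAux

open Filter

set_option maxHeartbeats 1000000 in
/-- If `F` is bipartite with `p(F) = s` and `a < s < b`, then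
`ex(n, K_{a,b}, F) = (1+o(1))·N(K_{a,b}, K_{s-1,n-s+1})` as `n → ∞`. -/
theorem stmt10 {α : Type} [Fintype α] (F : SimpleGraph α) (s : ℕ)
    (hs : IsLeast (smallerClassSizes F) s) (a b : ℕ) (has : a < s) (hsb : s < b) :
    (fun n : ℕ =>
      ((sSup {N : ℕ | ∃ G : SimpleGraph (Fin n), ¬ Contains F G ∧
          _root_.copyCount (completeBipartiteGraph (Fin a) (Fin b)) G = N} : ℕ) : ℝ) -
        ((_root_.copyCount (completeBipartiteGraph (Fin a) (Fin b))
          (completeBipartiteGraph (Fin (s - 1)) (Fin (n - s + 1))) : ℕ) : ℝ))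
      =o[atTop] (fun n : ℕ =>
        ((_root_.copyCount (completeBipartiteGraph (Fin a) (Fin b))
          (completeBipartiteGraph (Fin (s - 1)) (Fin (n - s + 1))) : ℕ) : ℝ)) := by
  classical
  rw [Asymptotics.isLittleO_iff]
  intro ε hε
  set c₀ : ℕ := s + b - 2 with hc₀
  have hs1 : 1 ≤ s := by omega
  have hc1pos : 0 < ((s-1).choose a) := Nat.choose_pos (by omega)
  have hev1 : ∀ᶠ n : ℕ in atTop, ((n:ℝ)/((n:ℝ)-c₀))^b ≤ 1 + ε/2 :=
    (StmtAux.tendsto_ratio_pow c₀ b).eventually (eventually_le_nhds (by linarith))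
  have hev2 : ∀ᶠ n : ℕ in atTop,
      (((Fintype.card α - s - 1).choose b * (Fintype.card α - s - 1).choose a : ℕ):ℝ)
        * (b.factorial:ℝ) * (((n:ℝ)/((n:ℝ)-c₀))^s * ((((n:ℝ)-c₀))^(b-s))⁻¹) ≤ ε/2 := by
    have hT : Tendsto (fun n : ℕ =>
        (((Fintype.card α - s - 1).choose b * (Fintype.card α - s - 1).choose a : ℕ):ℝ)
          * (b.factorial:ℝ) * (((n:ℝ)/((n:ℝ)-c₀))^s * ((((n:ℝ)-c₀))^(b-s))⁻¹))
        atTop (nhds 0) := by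
      have := (Tendsto.mul (StmtAux.tendsto_ratio_pow c₀ s)
        (StmtAux.tendsto_inv_pow_sub c₀ (k := b - s) (by omega))).const_mul
        ((((Fintype.card α - s - 1).choose b * (Fintype.card α - s - 1).choose a : ℕ):ℝ)
          * (b.factorial:ℝ))
      simpa using this
    exact hT.eventually (eventually_le_nhds (by linarith))
  filter_upwards [hev1, hev2, eventually_ge_atTop (s + b + c₀ + 1)] with n h1 h2 hn
  obtain ⟨k1, k2, k3, k4⟩ := StmtAux.key_bounds hs has hsb (show s ≤ n by omega)
  have hnc : (0:ℝ) < (n:ℝ) - c₀ := by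
    have : (c₀:ℝ) < (n:ℝ) := by exact_mod_cast (show c₀ < n by omega)
    linarith
  have hbfac : (0:ℝ) < (b.factorial : ℝ) := by exact_mod_cast b.factorial_pos
  -- cast the four bounds
  have hb1 : (((s-1).choose a : ℕ):ℝ) * (((n - s + 1).choose b : ℕ):ℝ)
      ≤ ((_root_.copyCount (completeBipartiteGraph (Fin a) (Fin b))
          (completeBipartiteGraph (Fin (s - 1)) (Fin (n - s + 1))) : ℕ) : ℝ) := by
    exact_mod_cast k1
  have hb2 : ((_root_.copyCount (completeBipartiteGraph (Fin a) (Fin b))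
        (completeBipartiteGraph (Fin (s - 1)) (Fin (n - s + 1))) : ℕ) : ℝ)
      ≤ ((n.choose b : ℕ):ℝ) * (((s-1).choose a : ℕ):ℝ)
        + ((n.choose s : ℕ):ℝ) * (((Fintype.card α - s - 1).choose b
            * (Fintype.card α - s - 1).choose a : ℕ):ℝ) := by
    exact_mod_cast k2
  have hb3 : (((s-1).choose a : ℕ):ℝ) * (((n - s + 1).choose b : ℕ):ℝ)
      ≤ ((sSup {N : ℕ | ∃ G : SimpleGraph (Fin n), ¬ Contains F G ∧
          _root_.copyCount (completeBipartiteGraph (Fin a) (Fin b)) G = N} : ℕ) : ℝ) := by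
    exact_mod_cast k3
  have hb4 : ((sSup {N : ℕ | ∃ G : SimpleGraph (Fin n), ¬ Contains F G ∧
        _root_.copyCount (completeBipartiteGraph (Fin a) (Fin b)) G = N} : ℕ) : ℝ)
      ≤ ((n.choose b : ℕ):ℝ) * (((s-1).choose a : ℕ):ℝ)
        + ((n.choose s : ℕ):ℝ) * (((Fintype.card α - s - 1).choose b
            * (Fintype.card α - s - 1).choose a : ℕ):ℝ) := by
    exact_mod_cast k4
  -- analytic facts
  have f1 : ((n.choose b : ℕ):ℝ) ≤ (n:ℝ)^b / b.factorial := Nat.choose_le_pow_div b n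
  have f3 : ((n.choose s : ℕ):ℝ) ≤ (n:ℝ)^s := by
    exact_mod_cast Nat.choose_le_pow n s
  have hcastm : ((n - s + 1 + 1 - b : ℕ) : ℝ) = (n:ℝ) - c₀ := by
    have hh : (n - s + 1 + 1 - b : ℕ) = n - c₀ := by omega
    rw [hh, Nat.cast_sub (show c₀ ≤ n by omega)]
  have f2 : ((n:ℝ) - c₀)^b / b.factorial ≤ (((n - s + 1).choose b : ℕ):ℝ) := by
    have h := Nat.pow_sub_le_descFactorial (n - s + 1) b
    rw [Nat.descFactorial_eq_factorial_mul_choose] at h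
    have h' : (((n - s + 1 + 1 - b : ℕ):ℝ))^b
        ≤ (b.factorial : ℝ) * (((n - s + 1).choose b : ℕ):ℝ) := by exact_mod_cast h
    rw [hcastm] at h'
    rw [div_le_iff₀ hbfac]
    linarith
  have hCnb : ((n.choose b : ℕ):ℝ) ≤ (1 + ε/2) * (((n - s + 1).choose b : ℕ):ℝ) := by
    have e1 : (n:ℝ)^b / b.factorial
        = ((n:ℝ)/((n:ℝ)-c₀))^b * (((n:ℝ)-c₀)^b / b.factorial) := by
      rw [div_pow]
      field_simp
    calc ((n.choose b : ℕ):ℝ) ≤ (n:ℝ)^b / b.factorial := f1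
      _ = ((n:ℝ)/((n:ℝ)-c₀))^b * (((n:ℝ)-c₀)^b / b.factorial) := e1
      _ ≤ (1 + ε/2) * (((n:ℝ)-c₀)^b / b.factorial) := by
          apply mul_le_mul_of_nonneg_right h1
          positivity
      _ ≤ (1 + ε/2) * (((n - s + 1).choose b : ℕ):ℝ) := by
          apply mul_le_mul_of_nonneg_left f2
          linarith
  have hCns : ((n.choose s : ℕ):ℝ) * (((Fintype.card α - s - 1).choose b
        * (Fintype.card α - s - 1).choose a : ℕ):ℝ)
      ≤ (ε/2) * (((n - s + 1).choose b : ℕ):ℝ) := by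
    have hsplit : ((n:ℝ)-c₀)^b = ((n:ℝ)-c₀)^s * ((n:ℝ)-c₀)^(b-s) := by
      rw [← pow_add]
      congr 1
      omega
    have e2 : (((Fintype.card α - s - 1).choose b
          * (Fintype.card α - s - 1).choose a : ℕ):ℝ) * (n:ℝ)^s
        = ((((Fintype.card α - s - 1).choose b
            * (Fintype.card α - s - 1).choose a : ℕ):ℝ) * (b.factorial:ℝ)
            * (((n:ℝ)/((n:ℝ)-c₀))^s * ((((n:ℝ)-c₀))^(b-s))⁻¹))
          * (((n:ℝ)-c₀)^b / b.factorial) := by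
      rw [hsplit, div_pow]
      field_simp
    calc ((n.choose s : ℕ):ℝ) * (((Fintype.card α - s - 1).choose b
          * (Fintype.card α - s - 1).choose a : ℕ):ℝ)
        ≤ (n:ℝ)^s * (((Fintype.card α - s - 1).choose b
            * (Fintype.card α - s - 1).choose a : ℕ):ℝ) := by
          apply mul_le_mul_of_nonneg_right f3
          positivity
      _ = (((Fintype.card α - s - 1).choose b
            * (Fintype.card α - s - 1).choose a : ℕ):ℝ) * (n:ℝ)^s := by ring
      _ = _ := e2
      _ ≤ (ε/2) * (((n:ℝ)-c₀)^b / b.factorial) := by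
          apply mul_le_mul_of_nonneg_right h2
          positivity
      _ ≤ (ε/2) * (((n - s + 1).choose b : ℕ):ℝ) := by
          apply mul_le_mul_of_nonneg_left f2
          linarith
  have hc1ge1 : (1:ℝ) ≤ (((s-1).choose a : ℕ):ℝ) := by exact_mod_cast hc1pos
  have hCmb0 : (0:ℝ) ≤ (((n - s + 1).choose b : ℕ):ℝ) := by positivity
  have hkey : ((n.choose b : ℕ):ℝ) * (((s-1).choose a : ℕ):ℝ)
      + ((n.choose s : ℕ):ℝ) * (((Fintype.card α - s - 1).choose b
          * (Fintype.card α - s - 1).choose a : ℕ):ℝ)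
      - (((s-1).choose a : ℕ):ℝ) * (((n - s + 1).choose b : ℕ):ℝ)
      ≤ ε * ((((s-1).choose a : ℕ):ℝ) * (((n - s + 1).choose b : ℕ):ℝ)) := by
    have p1 : ((n.choose b : ℕ):ℝ) * (((s-1).choose a : ℕ):ℝ)
        ≤ ((1 + ε/2) * (((n - s + 1).choose b : ℕ):ℝ)) * (((s-1).choose a : ℕ):ℝ) :=
      mul_le_mul_of_nonneg_right hCnb (by positivity)
    have q1 : (ε/2) * (((n - s + 1).choose b : ℕ):ℝ)
        ≤ (ε/2) * ((((s-1).choose a : ℕ):ℝ) * (((n - s + 1).choose b : ℕ):ℝ)) := by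
      have h0 : (((n - s + 1).choose b : ℕ):ℝ)
          ≤ (((s-1).choose a : ℕ):ℝ) * (((n - s + 1).choose b : ℕ):ℝ) :=
        le_mul_of_one_le_left hCmb0 hc1ge1
      have h0' : (0:ℝ) ≤ ε/2 := by linarith
      exact mul_le_mul_of_nonneg_left h0 h0'
    linarith [p1, q1, hCns]
  have hVpos : (0:ℝ) ≤ ((_root_.copyCount (completeBipartiteGraph (Fin a) (Fin b))
      (completeBipartiteGraph (Fin (s - 1)) (Fin (n - s + 1))) : ℕ) : ℝ) :=
    Nat.cast_nonneg _
  rw [Real.norm_eq_abs, Real.norm_eq_abs, abs_of_nonneg hVpos, abs_le]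
  have hmul : ε * ((((s-1).choose a : ℕ):ℝ) * (((n - s + 1).choose b : ℕ):ℝ))
      ≤ ε * ((_root_.copyCount (completeBipartiteGraph (Fin a) (Fin b))
        (completeBipartiteGraph (Fin (s - 1)) (Fin (n - s + 1))) : ℕ) : ℝ) :=
    mul_le_mul_of_nonneg_left hb1 hε.le
  constructor
  · linarith
  · linarith
end
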